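/- Let d ≥ 1, α ∈ (0,1), and let φ : ℝ^d → ℝ be bounded and α-Hölder continuous with Hölder seminorm [φ]_α. Then there is a constant C = C(d,α) > 0 such that for every r > 0 and every i ∈ {1,…,d}, the convolution K(r,·) * φ is differentiable and sup_{x ∈ ℝ^d} |∂_{x_i}(K(r,·) * φ)(x)| ≤ C r^{(α-1)/2} [φ]_α. -/

import Mathlib

set_option maxHeartbeats 2000000
set_option synthInstance.maxHeartbeats 1000000
open MeasureTheory Real
noncomputable def heatKernel (d : ℕ) (r : ℝ) (x : EuclideanSpace ℝ (Fin d)) : ℝ :=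
  (2 * Real.pi * r) ^ (-(d : ℝ) / 2) * Real.exp (-‖x‖ ^ 2 / (2 * r))

lemma heatKernel_pos {d : ℕ} {r : ℝ} (hr : 0 < r) (x : EuclideanSpace ℝ (Fin d)) :
    0 < heatKernel d r x := by
  unfold heatKernel; positivity

lemma continuous_heatKernel (d : ℕ) (r : ℝ) : Continuous (heatKernel d r) := by
  unfold heatKernel; fun_prop

lemma heatKernel_eq {d : ℕ} {r : ℝ} (x : EuclideanSpace ℝ (Fin d)) :
    heatKernel d r x = (2 * Real.pi * r) ^ (-(d : ℝ) / 2) * Real.exp (-((2*r)⁻¹ * ‖x‖ ^ 2)) := by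
  unfold heatKernel; congr 1; ring

lemma hasFDerivAt_heatKernel_sub {d : ℕ} {r : ℝ} (hr : 0 < r)
    (a z : EuclideanSpace ℝ (Fin d)) :
    HasFDerivAt (fun w => heatKernel d r (w - a))
      ((-(1/r) * heatKernel d r (z - a)) • innerSL ℝ (z - a)) z := by
  have h2 : HasFDerivAt (fun w : EuclideanSpace ℝ (Fin d) => ‖w - a‖ ^ 2)
      (2 • (innerSL ℝ (z - a))) z := by
    simpa using ((hasFDerivAt_id z).sub_const a).norm_sq
  have h3 := ((h2.const_mul (-(2*r)⁻¹)).exp).const_mul ((2 * Real.pi * r) ^ (-(d:ℝ)/2))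
  have hfun : (fun w : EuclideanSpace ℝ (Fin d) => heatKernel d r (w - a))
      = fun w => (2 * Real.pi * r) ^ (-(d:ℝ)/2) * Real.exp (-(2*r)⁻¹ * ‖w - a‖ ^ 2) := by
    funext w; unfold heatKernel; congr 1; ring
  rw [hfun]
  refine h3.congr_fderiv ?_
  ext w
  simp only [heatKernel, ContinuousLinearMap.smul_apply, smul_eq_mul, nsmul_eq_mul,
    Nat.cast_ofNat, innerSL_apply_apply]
  have hrne : r ≠ 0 := hr.ne'
  field_simp

lemma integrable_gauss {d : ℕ} {b : ℝ} (hb : 0 < b) :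
    Integrable (fun v : EuclideanSpace ℝ (Fin d) => Real.exp (-(b * ‖v‖^2))) := by
  have h := (GaussianFourier.integrable_cexp_neg_mul_sq_norm_add
    (V := EuclideanSpace ℝ (Fin d)) (b := (b:ℂ)) (by simpa using hb) 0 0).norm
  refine h.congr ?_
  filter_upwards with v
  rw [Complex.norm_exp]
  norm_num
  left
  norm_cast

lemma exists_rpow_le_exp_sq (β c : ℝ) (hβ : 0 ≤ β) (hc : 0 < c) :
    ∃ A : ℝ, 0 < A ∧ ∀ t : ℝ, 0 ≤ t → t ^ β ≤ A * Real.exp (c * t^2) := by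
  refine ⟨Real.exp (β^2/(4*c)) + 1, by positivity, fun t ht => ?_⟩
  rcases le_or_gt t 1 with h | h
  · have h1 : t ^ β ≤ 1 := Real.rpow_le_one ht h hβ
    nlinarith [Real.exp_pos (c*t^2), Real.one_le_exp (by positivity : (0:ℝ) ≤ c*t^2),
      Real.exp_pos (β^2/(4*c))]
  · have h0 : 0 < t := lt_trans zero_lt_one h
    rw [Real.rpow_def_of_pos h0]
    have hlog : Real.log t ≤ t := Real.log_le_self h0.le
    have hq : β^2 = 4*c*(β^2/(4*c)) := by field_simp
    have key : Real.log t * β ≤ β^2/(4*c) + c*t^2 := by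
      nlinarith [sq_nonneg (β - 2*c*t), mul_le_mul_of_nonneg_right hlog hβ]
    calc Real.exp (Real.log t * β) ≤ Real.exp (β^2/(4*c) + c*t^2) := Real.exp_le_exp.2 key
      _ = Real.exp (β^2/(4*c)) * Real.exp (c*t^2) := Real.exp_add _ _
      _ ≤ (Real.exp (β^2/(4*c)) + 1) * Real.exp (c*t^2) := by
          nlinarith [Real.exp_pos (c*t^2)]

lemma integrable_poly_gauss {d : ℕ} {β b : ℝ} (hβ : 0 ≤ β) (hb : 0 < b) :
    Integrable (fun v : EuclideanSpace ℝ (Fin d) => ‖v‖ ^ β * Real.exp (-(b * ‖v‖^2))) := by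
  obtain ⟨A, hA, hAle⟩ := exists_rpow_le_exp_sq β (b/2) hβ (by positivity)
  refine Integrable.mono ((integrable_gauss (d := d) (b := b/2)
    (by positivity)).const_mul A) ?_ ?_
  · exact ((continuous_norm.rpow_const (fun v => Or.inr hβ)).mul
      ((continuous_const.mul (continuous_norm.pow 2)).neg.rexp)).aestronglyMeasurable
  · filter_upwards with v
    have h1 : ‖v‖ ^ β ≤ A * Real.exp (b/2 * ‖v‖^2) := hAle _ (norm_nonneg v)
    have h2 : (0:ℝ) < Real.exp (-(b * ‖v‖^2)) := Real.exp_pos _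
    rw [Real.norm_eq_abs, Real.norm_eq_abs, abs_of_nonneg (by positivity),
      abs_of_nonneg (by positivity)]
    calc ‖v‖ ^ β * Real.exp (-(b * ‖v‖^2))
        ≤ (A * Real.exp (b/2 * ‖v‖^2)) * Real.exp (-(b * ‖v‖^2)) := by
          exact mul_le_mul_of_nonneg_right h1 h2.le
      _ = A * Real.exp (-(b/2 * ‖v‖^2)) := by
          rw [mul_assoc, ← Real.exp_add]; congr 2; ring

lemma continuous_of_holder {d : ℕ} {φ : EuclideanSpace ℝ (Fin d) → ℝ} {M α : ℝ}
    (hα : 0 < α) (h : ∀ x y, |φ x - φ y| ≤ M * ‖x - y‖ ^ α) : Continuous φ := by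
  rw [continuous_iff_continuousAt]
  intro x
  rw [ContinuousAt, tendsto_iff_dist_tendsto_zero]
  have h1 : Filter.Tendsto (fun z : EuclideanSpace ℝ (Fin d) => ‖z - x‖) (nhds x) (nhds 0) := by
    have hc : Continuous (fun z : EuclideanSpace ℝ (Fin d) => ‖z - x‖) :=
      (continuous_id.sub continuous_const).norm
    have := hc.tendsto x
    simpa using this
  have h2 : Filter.Tendsto (fun z : EuclideanSpace ℝ (Fin d) => M * ‖z - x‖ ^ α)
      (nhds x) (nhds 0) := by
    have h3 := (Real.continuousAt_rpow_const 0 α (Or.inr hα.le)).tendsto.comp h1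
    rw [Real.zero_rpow hα.ne'] at h3
    have := h3.const_mul M
    simpa using this
  refine squeeze_zero (fun z => dist_nonneg) (fun z => ?_) h2
  rw [Real.dist_eq]
  exact h z x

lemma rpow_mul_self {t α : ℝ} (ht : 0 ≤ t) (hα : 0 < α) : t ^ α * t = t ^ (α + 1) := by
  rcases eq_or_lt_of_le ht with h | h
  · rw [← h, Real.zero_rpow hα.ne', Real.zero_rpow (by positivity : α + 1 ≠ 0), zero_mul]
  · rw [Real.rpow_add_one h.ne' α]

theorem stmt_0 (d : ℕ) (hd : 1 ≤ d) (α : ℝ) (hα : α ∈ Set.Ioo (0 : ℝ) 1) :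
    ∃ C : ℝ, 0 < C ∧
      ∀ (φ : EuclideanSpace ℝ (Fin d) → ℝ) (M : ℝ), 0 ≤ M →
        (∃ B : ℝ, ∀ x, |φ x| ≤ B) →
        (∀ x y, |φ x - φ y| ≤ M * ‖x - y‖ ^ α) →
        ∀ r : ℝ, 0 < r → ∀ i : Fin d, ∀ x : EuclideanSpace ℝ (Fin d),
          DifferentiableAt ℝ (fun z => ∫ y, heatKernel d r (z - y) * φ y) x ∧
          |fderiv ℝ (fun z => ∫ y, heatKernel d r (z - y) * φ y) x
              (EuclideanSpace.single i 1)| ≤ C * r ^ ((α - 1) / 2) * M := by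
  obtain ⟨hα0, hα1⟩ := hα
  refine ⟨1 + (2*Real.pi) ^ (-(d:ℝ)/2) *
      ∫ v : EuclideanSpace ℝ (Fin d), ‖v‖ ^ (α+1) * Real.exp (-(2⁻¹ * ‖v‖^2)), ?_, ?_⟩
  · have hJ : 0 ≤ ∫ v : EuclideanSpace ℝ (Fin d), ‖v‖ ^ (α+1) * Real.exp (-(2⁻¹ * ‖v‖^2)) :=
      integral_nonneg (fun v => by positivity)
    positivity
  intro φ M hM hBdd hHol r hr i x₀
  obtain ⟨B, hB⟩ := hBdd
  have hφc : Continuous φ := continuous_of_holder hα0 hHol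
  set J := ∫ v : EuclideanSpace ℝ (Fin d), ‖v‖ ^ (α+1) * Real.exp (-(2⁻¹ * ‖v‖^2)) with hJdef
  have hJ0 : 0 ≤ J := integral_nonneg (fun v => by positivity)
  set c := (2 * Real.pi * r) ^ (-(d:ℝ)/2) with hcdef
  have hc : 0 < c := by rw [hcdef]; positivity
  set b := (2*r)⁻¹ with hbdef
  have hb : 0 < b := by rw [hbdef]; positivity
  have hbr : b * r = 2⁻¹ := by rw [hbdef]; field_simp
  set s := Real.sqrt r with hsdef
  have hs0 : 0 < s := Real.sqrt_pos.2 hr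
  have hs2 : s^2 = r := Real.sq_sqrt hr.le
  have hKc : Continuous (heatKernel d r) := continuous_heatKernel d r
  -- kernel integrability
  have hK1 : Integrable (fun u : EuclideanSpace ℝ (Fin d) => heatKernel d r u) := by
    have he : (fun u : EuclideanSpace ℝ (Fin d) => heatKernel d r u)
        = fun u => c * Real.exp (-(b * ‖u‖^2)) := by
      funext u; rw [heatKernel_eq, hcdef, hbdef]
    rw [he]
    exact (integrable_gauss hb).const_mul c
  have hKz : ∀ z : EuclideanSpace ℝ (Fin d), Integrable (fun y => heatKernel d r (z - y)) :=
    fun z => hK1.comp_sub_left z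
  have hFint : ∀ z : EuclideanSpace ℝ (Fin d),
      Integrable (fun y => heatKernel d r (z - y) * (φ y - φ x₀)) := by
    intro z
    have h := (hKz z).bdd_mul ((hφc.sub continuous_const).aestronglyMeasurable)
      (c := B + |φ x₀|) (Filter.Eventually.of_forall fun y => by
        rw [Real.norm_eq_abs, sub_eq_add_neg]
        calc |φ y + -φ x₀| ≤ |φ y| + |(-φ x₀)| := abs_add_le _ _
          _ ≤ B + |φ x₀| := by rw [abs_neg]; exact add_le_add_left (hB y) _)
    simpa [mul_comm] using h
  -- constants for the domination
  obtain ⟨A₁, hA₁, hA₁le⟩ := exists_rpow_le_exp_sq α (b/8) hα0.le (by positivity)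
  obtain ⟨A₂, hA₂, hA₂le₀⟩ := exists_rpow_le_exp_sq 1 (b/8) zero_le_one (by positivity)
  have hA₂le : ∀ t : ℝ, 0 ≤ t → t ≤ A₂ * Real.exp (b/8 * t^2) := by
    intro t ht; have h := hA₂le₀ t ht; rwa [Real.rpow_one] at h
  set bound : EuclideanSpace ℝ (Fin d) → ℝ :=
    fun y => (M * (c/r) * Real.exp 2⁻¹ * A₁ * (A₂ + s)) * Real.exp (-(b/4 * ‖y - x₀‖^2))
    with hbound
  set F' : EuclideanSpace ℝ (Fin d) → EuclideanSpace ℝ (Fin d) →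
      (EuclideanSpace ℝ (Fin d) →L[ℝ] ℝ) :=
    fun z y => (φ y - φ x₀) • ((-(1/r) * heatKernel d r (z - y)) • innerSL ℝ (z - y)) with hF'
  have hF'norm : ∀ z y, ‖F' z y‖
      ≤ |φ y - φ x₀| * ((1/r) * heatKernel d r (z - y) * ‖z - y‖) := by
    intro z y
    simp only [hF']
    calc ‖(φ y - φ x₀) • ((-(1/r) * heatKernel d r (z - y)) • innerSL ℝ (z - y))‖
        ≤ |φ y - φ x₀| * ‖(-(1/r) * heatKernel d r (z - y)) • innerSL ℝ (z - y)‖ := by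
          have h := norm_smul_le (φ y - φ x₀) ((-(1/r) * heatKernel d r (z - y)) • innerSL ℝ (z - y))
          rwa [Real.norm_eq_abs] at h
      _ ≤ |φ y - φ x₀| * (|(-(1/r) * heatKernel d r (z - y))| * ‖z - y‖) := by
          have h := norm_smul_le (-(1/r) * heatKernel d r (z - y)) (innerSL (𝕜 := ℝ) (z - y))
          rw [innerSL_apply_norm, Real.norm_eq_abs] at h
          exact mul_le_mul_of_nonneg_left h (abs_nonneg _)
      _ = |φ y - φ x₀| * ((1/r) * heatKernel d r (z - y) * ‖z - y‖) := by
          rw [abs_mul, abs_neg, abs_of_pos (heatKernel_pos hr _),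
            abs_of_pos (by positivity : (0:ℝ) < 1/r)]
  have h_bound_pt : ∀ y : EuclideanSpace ℝ (Fin d), ∀ z ∈ Metric.ball x₀ s,
      ‖F' z y‖ ≤ bound y := by
    intro y z hz
    have hzx : ‖z - x₀‖ < s := by rwa [Metric.mem_ball, dist_eq_norm] at hz
    have ht : (0:ℝ) ≤ ‖y - x₀‖ := norm_nonneg _
    have hw1 : ‖z - y‖ ≤ ‖y - x₀‖ + s := by
      have he : z - y = (z - x₀) - (y - x₀) := by abel
      calc ‖z - y‖ = ‖(z - x₀) - (y - x₀)‖ := by rw [he]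
        _ ≤ ‖z - x₀‖ + ‖y - x₀‖ := norm_sub_le _ _
        _ ≤ ‖y - x₀‖ + s := by linarith
    have hw2 : ‖y - x₀‖ - s ≤ ‖z - y‖ := by
      have he : y - x₀ = (y - z) + (z - x₀) := by abel
      have h4 : ‖y - x₀‖ ≤ ‖y - z‖ + ‖z - x₀‖ := by rw [he]; exact norm_add_le _ _
      rw [norm_sub_rev y z] at h4
      linarith
    have hwsq : ‖y - x₀‖^2/2 - r ≤ ‖z - y‖^2 := by
      rcases le_or_gt ‖y - x₀‖ s with hcase | hcase
      · nlinarith [mul_self_le_mul_self ht hcase, hs2, sq_nonneg ‖z - y‖]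
      · have h9 : 0 ≤ ‖y - x₀‖ - s := by linarith
        have h10 : (‖y - x₀‖ - s)^2 ≤ ‖z - y‖^2 := pow_le_pow_left₀ h9 hw2 2
        nlinarith [h10, hs2, sq_nonneg (‖y - x₀‖ - 2*s)]
    have hker : heatKernel d r (z - y)
        ≤ c * (Real.exp 2⁻¹ * Real.exp (-(b/2 * ‖y - x₀‖^2))) := by
      rw [heatKernel_eq, ← hcdef, ← hbdef]
      have hee : Real.exp (-(b * ‖z - y‖^2))
          ≤ Real.exp 2⁻¹ * Real.exp (-(b/2 * ‖y - x₀‖^2)) := by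
        rw [← Real.exp_add]
        apply Real.exp_le_exp.2
        nlinarith [mul_le_mul_of_nonneg_left hwsq hb.le, hbr]
      exact mul_le_mul_of_nonneg_left hee hc.le
    have hφb : |φ y - φ x₀| ≤ M * ‖y - x₀‖ ^ α := hHol y x₀
    refine le_trans (hF'norm z y) ?_
    have hKpos := (heatKernel_pos hr (z - y)).le
    have h5 : ‖y - x₀‖ ^ α ≤ A₁ * Real.exp (b/8 * ‖y - x₀‖^2) := hA₁le _ ht
    have h6 : ‖y - x₀‖ + s ≤ (A₂ + s) * Real.exp (b/8 * ‖y - x₀‖^2) := by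
      have h7 : ‖y - x₀‖ ≤ A₂ * Real.exp (b/8 * ‖y - x₀‖^2) := hA₂le _ ht
      have h8 : (1:ℝ) ≤ Real.exp (b/8 * ‖y - x₀‖^2) := Real.one_le_exp (by positivity)
      nlinarith [hs0]
    calc |φ y - φ x₀| * ((1/r) * heatKernel d r (z - y) * ‖z - y‖)
        ≤ (M * ‖y - x₀‖ ^ α) *
          ((1/r) * (c * (Real.exp 2⁻¹ * Real.exp (-(b/2 * ‖y - x₀‖^2)))) * (‖y - x₀‖ + s)) := by
          apply mul_le_mul hφb ?_ (by positivity) (by positivity)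
          apply mul_le_mul ?_ hw1 (norm_nonneg _) (by positivity)
          exact mul_le_mul_of_nonneg_left hker (by positivity)
      _ ≤ (M * (A₁ * Real.exp (b/8 * ‖y - x₀‖^2))) *
          ((1/r) * (c * (Real.exp 2⁻¹ * Real.exp (-(b/2 * ‖y - x₀‖^2)))) *
            ((A₂ + s) * Real.exp (b/8 * ‖y - x₀‖^2))) := by
          gcongr
      _ = (M * (c/r) * Real.exp 2⁻¹ * A₁ * (A₂ + s)) *
          (Real.exp (b/8 * ‖y - x₀‖^2) * Real.exp (-(b/2 * ‖y - x₀‖^2)) *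
            Real.exp (b/8 * ‖y - x₀‖^2)) := by ring
      _ = bound y := by
          rw [hbound]
          simp only []
          rw [← Real.exp_add, ← Real.exp_add]
          congr 2
          ring
  have hbound_int : Integrable bound := by
    rw [hbound]
    exact ((integrable_gauss (d := d) (b := b/4) (by positivity)).comp_sub_right x₀).const_mul _
  have hG : HasFDerivAt (fun z => ∫ y, heatKernel d r (z - y) * (φ y - φ x₀))
      (∫ y, F' x₀ y) x₀ := by
    apply hasFDerivAt_integral_of_dominated_of_fderiv_le (s := Metric.ball x₀ s) (bound := bound) (Metric.ball_mem_nhds x₀ hs0)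
    · filter_upwards with z
      exact ((hKc.comp (continuous_const.sub continuous_id)).mul
        (hφc.sub continuous_const)).aestronglyMeasurable
    · exact hFint x₀
    · apply Continuous.aestronglyMeasurable
      rw [hF']
      exact (hφc.sub continuous_const).smul
        ((continuous_const.mul (hKc.comp (continuous_const.sub continuous_id))).smul
          ((innerSL ℝ).continuous.comp (continuous_const.sub continuous_id)))
    · exact Filter.Eventually.of_forall h_bound_pt
    · exact hbound_int
    · filter_upwards with y z hz
      exact (hasFDerivAt_heatKernel_sub hr y z).mul_const _
  have hsplit : (fun z => ∫ y, heatKernel d r (z - y) * φ y)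
      = fun z => (∫ y, heatKernel d r (z - y) * (φ y - φ x₀))
          + (∫ u, heatKernel d r u) * φ x₀ := by
    funext z
    have e1 : (fun y => heatKernel d r (z - y) * φ y)
        = fun y => heatKernel d r (z - y) * (φ y - φ x₀) + heatKernel d r (z - y) * φ x₀ := by
      funext y; ring
    rw [e1, integral_add (hFint z) ((hKz z).mul_const (φ x₀)), integral_mul_const,
      integral_sub_left_eq_self (heatKernel d r) volume z]
  have hD : HasFDerivAt (fun z => ∫ y, heatKernel d r (z - y) * φ y) (∫ y, F' x₀ y) x₀ := by
    rw [hsplit]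
    exact hG.add_const _
  refine ⟨hD.differentiableAt, ?_⟩
  rw [hD.fderiv]
  -- now the quantitative bound
  set D := ∫ y, F' x₀ y with hDdef
  have h1 : |D (EuclideanSpace.single i 1)| ≤ ‖D‖ := by
    have h := D.le_opNorm (EuclideanSpace.single i (1:ℝ))
    rw [EuclideanSpace.norm_single, norm_one, mul_one, Real.norm_eq_abs] at h
    exact h
  have h2 : ‖D‖ ≤ ∫ y, ‖F' x₀ y‖ := norm_integral_le_integral_norm _
  set f : EuclideanSpace ℝ (Fin d) → ℝ :=
    fun u => ‖u‖ ^ (α+1) * Real.exp (-(b * ‖u‖^2)) with hfdef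
  have hfint : Integrable f := integrable_poly_gauss (by positivity) hb
  have h3 : ∫ y, ‖F' x₀ y‖ ≤ ∫ y, (M * (c/r)) * f (y - x₀) := by
    apply integral_mono_of_nonneg
    · filter_upwards with y; exact norm_nonneg _
    · exact (hfint.comp_sub_right x₀).const_mul _
    · filter_upwards with y
      refine le_trans (hF'norm x₀ y) ?_
      have hφb : |φ y - φ x₀| ≤ M * ‖y - x₀‖ ^ α := hHol y x₀
      have hxy : ‖x₀ - y‖ = ‖y - x₀‖ := norm_sub_rev _ _
      have hkval : heatKernel d r (x₀ - y) = c * Real.exp (-(b * ‖y - x₀‖^2)) := by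
        rw [heatKernel_eq, ← hcdef, ← hbdef, hxy]
      have hKpos := (heatKernel_pos hr (x₀ - y)).le
      calc |φ y - φ x₀| * ((1/r) * heatKernel d r (x₀ - y) * ‖x₀ - y‖)
          ≤ (M * ‖y - x₀‖ ^ α) * ((1/r) * heatKernel d r (x₀ - y) * ‖x₀ - y‖) := by
            apply mul_le_mul_of_nonneg_right hφb (by positivity)
        _ = (M * (c/r)) * (‖y - x₀‖ ^ α * ‖y - x₀‖ * Real.exp (-(b * ‖y - x₀‖^2))) := by
            rw [hkval, hxy]; ring
        _ = (M * (c/r)) * f (y - x₀) := by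
            rw [hfdef]
            simp only []
            rw [rpow_mul_self (norm_nonneg _) hα0]
  have h4 : ∫ y, (M * (c/r)) * f (y - x₀) = (M * (c/r)) * ∫ u, f u := by
    rw [integral_const_mul, integral_sub_right_eq_self f x₀]
  have h5 : ∫ u, f u = (s ^ d) * ∫ v, f (s • v) := by
    have hsc := MeasureTheory.Measure.integral_comp_smul_of_nonneg (μ := volume) f s
      (hR := Real.sqrt_nonneg r)
    rw [finrank_euclideanSpace_fin] at hsc
    rw [hsc, smul_eq_mul, ← mul_assoc, mul_inv_cancel₀ (by positivity : (s:ℝ)^d ≠ 0), one_mul]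
  have h6 : (fun v : EuclideanSpace ℝ (Fin d) => f (s • v))
      = fun v => (s ^ (α+1)) * (‖v‖ ^ (α+1) * Real.exp (-(2⁻¹ * ‖v‖^2))) := by
    funext v
    rw [hfdef]
    simp only []
    rw [norm_smul, Real.norm_eq_abs, abs_of_nonneg hs0.le,
      Real.mul_rpow hs0.le (norm_nonneg v), mul_pow, hs2]
    have he : b * (r * ‖v‖^2) = 2⁻¹ * ‖v‖^2 := by rw [← mul_assoc, hbr]
    rw [show b * (r * ‖v‖ ^ 2) = 2⁻¹ * ‖v‖^2 from he]
    ring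
  have h7 : ∫ v, f (s • v) = s ^ (α+1) * J := by
    rw [h6, integral_const_mul]
  have hsd : (s:ℝ)^(d:ℕ) = r ^ ((d:ℝ)/2) := by
    rw [hsdef, Real.sqrt_eq_rpow, ← Real.rpow_natCast (r ^ ((1:ℝ)/2)) d, ← Real.rpow_mul hr.le]
    congr 1; ring
  have hsa : s ^ (α+1) = r ^ ((α+1)/2) := by
    rw [hsdef, Real.sqrt_eq_rpow, ← Real.rpow_mul hr.le]
    congr 1; ring
  have hcsplit : c = (2*Real.pi) ^ (-(d:ℝ)/2) * r ^ (-(d:ℝ)/2) := by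
    rw [hcdef, Real.mul_rpow (by positivity) hr.le]
  have hrpow : r ^ (-(d:ℝ)/2) / r * (r ^ ((d:ℝ)/2) * r ^ ((α+1)/2)) = r ^ ((α-1)/2) := by
    rw [show r ^ (-(d:ℝ)/2) / r = r ^ (-(d:ℝ)/2) / r ^ (1:ℝ) by rw [Real.rpow_one],
      ← Real.rpow_sub hr, ← Real.rpow_add hr, ← Real.rpow_add hr]
    congr 1; ring
  have hfinal : (M * (c/r)) * ((s^d) * (s^(α+1) * J))
      = M * ((2*Real.pi) ^ (-(d:ℝ)/2) * J) * r ^ ((α-1)/2) := by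
    rw [hcsplit, hsd, hsa, ← hrpow]; ring
  have hP : (0:ℝ) ≤ (2*Real.pi) ^ (-(d:ℝ)/2) := by positivity
  have hR : (0:ℝ) < r ^ ((α-1)/2) := Real.rpow_pos_of_pos hr _
  calc |D (EuclideanSpace.single i 1)| ≤ ‖D‖ := h1
    _ ≤ ∫ y, ‖F' x₀ y‖ := h2
    _ ≤ ∫ y, (M * (c/r)) * f (y - x₀) := h3
    _ = (M * (c/r)) * ∫ u, f u := h4
    _ = (M * (c/r)) * ((s^d) * (s^(α+1) * J)) := by rw [h5, h7]
    _ = M * ((2*Real.pi) ^ (-(d:ℝ)/2) * J) * r ^ ((α-1)/2) := hfinal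
    _ ≤ (1 + (2*Real.pi) ^ (-(d:ℝ)/2) * J) * r ^ ((α-1)/2) * M := by
        nlinarith [mul_nonneg hR.le hM, mul_nonneg (mul_nonneg hP hJ0) (mul_nonneg hR.le hM)]
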